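/- Let n, r, ℓ be integers with 0 ≤ ℓ ≤ n − r, let A ∈ ℝ^{n×d} have orthonormal columns with first column 1_n/√n, and let T ⊆ {1,...,n} with |T| = ℓ. Set b = 1_T/√ℓ (assuming ℓ ≥ 1). If a coreset C ⊆ {1,...,n} of size r is disjoint from T, then the coreset regression solution is x̃_opt = 0, with ‖A x̃_opt − b‖₂² = 1, while min_x ‖A x − b‖₂² ≤ (n−ℓ)/n; hence ‖A x̃_opt − b‖₂² ≥ (n/(n−ℓ))·min_x ‖A x − b‖₂². -/

import Mathlib

open Matrix

noncomputable def vnSq {ι : Type*} [Fintype ι] (x : ι → ℝ) : ℝ :=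
  ∑ i, (x i) ^ 2

lemma sum_ite_mem_const {n : ℕ} (T : Finset (Fin n)) (u v : ℝ) :
    ∑ i : Fin n, (if i ∈ T then u else v) = T.card * u + ((n : ℝ) - T.card) * v := by
  rw [← Finset.sum_filter_add_sum_filter_not Finset.univ (· ∈ T) (fun i => if i ∈ T then u else v)]
  rw [Finset.sum_congr rfl (fun i hi => if_pos (Finset.mem_filter.mp hi).2),
      Finset.sum_congr rfl (fun i hi => if_neg (by simpa using (Finset.mem_filter.mp hi).2))]
  rw [Finset.sum_const, Finset.sum_const, Finset.filter_mem_eq_inter, Finset.univ_inter,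
      Finset.filter_not, Finset.filter_mem_eq_inter, Finset.univ_inter,
      Finset.card_sdiff_of_subset (Finset.subset_univ T), nsmul_eq_mul, nsmul_eq_mul,
      Nat.cast_sub (by simpa using Finset.card_le_card (Finset.subset_univ T))]
  simp

lemma alg_key (n ℓ s : ℝ) (hn : 0 < n) (hs0 : 0 < s) (hs : s ^ 2 = ℓ) :
    ℓ * (s / n - 1 / s) ^ 2 + (n - ℓ) * (s / n) ^ 2 = (n - ℓ) / n := by
  field_simp
  linear_combination (n * (s ^ 2 - n)) * hs

theorem randomized_agnostic_bad_target {n d r ℓ : ℕ}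
    (hd : 0 < d) (hℓ : 1 ≤ ℓ) (hℓn : ℓ ≤ n - r)
    (A : Matrix (Fin n) (Fin d) ℝ)
    (horth : Aᵀ * A = 1)
    (hcol : ∀ i, A i ⟨0, hd⟩ = 1 / Real.sqrt n)
    (T : Finset (Fin n)) (hT : T.card = ℓ)
    (b : Fin n → ℝ)
    (hb : b = fun i => if i ∈ T then 1 / Real.sqrt (ℓ : ℝ) else 0)
    (C : Finset (Fin n)) (hC : C.card = r) (hdisj : Disjoint C T) :
    (∀ s : Fin n → ℝ, (∀ i ∈ C, 0 < s i) → ∀ x : Fin d → ℝ,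
        (∑ i ∈ C, s i * ((A.mulVec 0) i - b i) ^ 2)
          ≤ ∑ i ∈ C, s i * ((A.mulVec x) i - b i) ^ 2)
    ∧ vnSq (A.mulVec 0 - b) = 1
    ∧ (∃ x : Fin d → ℝ, vnSq (A.mulVec x - b) ≤ ((n : ℝ) - ℓ) / n)
    ∧ ∀ xstar : Fin d → ℝ,
        (∀ x : Fin d → ℝ, vnSq (A.mulVec xstar - b) ≤ vnSq (A.mulVec x - b)) →
          ((n : ℝ) / ((n : ℝ) - ℓ)) * vnSq (A.mulVec xstar - b)
            ≤ vnSq (A.mulVec 0 - b) := by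
  have hℓn' : ℓ ≤ n := hT ▸ (by simpa using Finset.card_le_card (Finset.subset_univ T))
  have hn : 0 < n := lt_of_lt_of_le hℓ hℓn'
  have hnR : (0:ℝ) < n := by exact_mod_cast hn
  have hℓR : (0:ℝ) < ℓ := by exact_mod_cast hℓ
  have hsℓ : Real.sqrt ℓ ^ 2 = ℓ := Real.sq_sqrt hℓR.le
  have hsℓ0 : (0:ℝ) < Real.sqrt ℓ := Real.sqrt_pos.mpr hℓR
  have hsn : Real.sqrt n ^ 2 = n := Real.sq_sqrt hnR.le
  have hsn0 : (0:ℝ) < Real.sqrt n := Real.sqrt_pos.mpr hnR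
  -- Part 1
  have h1 : ∀ s : Fin n → ℝ, (∀ i ∈ C, 0 < s i) → ∀ x : Fin d → ℝ,
      (∑ i ∈ C, s i * ((A.mulVec 0) i - b i) ^ 2)
        ≤ ∑ i ∈ C, s i * ((A.mulVec x) i - b i) ^ 2 := by
    intro s hs x
    have hLHS : (∑ i ∈ C, s i * ((A.mulVec 0) i - b i) ^ 2) = 0 := by
      apply Finset.sum_eq_zero
      intro i hi
      have hbi : b i = 0 := by
        rw [hb]; simp [Finset.disjoint_left.mp hdisj hi]
      simp [Matrix.mulVec_zero, hbi]
    rw [hLHS]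
    exact Finset.sum_nonneg fun i hi => mul_nonneg (hs i hi).le (sq_nonneg _)
  -- Part 2
  have h2 : vnSq (A.mulVec 0 - b) = 1 := by
    have e : vnSq (A.mulVec 0 - b) = ∑ i, (b i) ^ 2 := by
      unfold vnSq; simp [Matrix.mulVec_zero]
    rw [e, hb]
    have e2 : ∀ i : Fin n, ((if i ∈ T then 1 / Real.sqrt (ℓ:ℝ) else 0) : ℝ) ^ 2
        = if i ∈ T then (1 / Real.sqrt (ℓ:ℝ)) ^ 2 else 0 := by
      intro i; split <;> simp
    simp only [e2]
    rw [sum_ite_mem_const, hT]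
    rw [div_pow, one_pow, hsℓ]
    field_simp
    simp
  -- Part 3
  have h3 : ∃ x : Fin d → ℝ, vnSq (A.mulVec x - b) ≤ ((n : ℝ) - ℓ) / n := by
    refine ⟨fun j => if j = ⟨0, hd⟩ then Real.sqrt ℓ / Real.sqrt n else 0, ?_⟩
    have hmv : ∀ i, (A.mulVec (fun j => if j = ⟨0, hd⟩ then Real.sqrt ℓ / Real.sqrt n else 0)) i
        = Real.sqrt ℓ / n := by
      intro i
      simp only [Matrix.mulVec, dotProduct, mul_ite, mul_zero]
      rw [Finset.sum_ite_eq' Finset.univ]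
      simp [hcol i]
      rw [inv_mul_eq_div, div_div]
      congr 1
      nlinarith [hsn]
    have key : vnSq (A.mulVec (fun j => if j = ⟨0, hd⟩ then Real.sqrt ℓ / Real.sqrt n else 0) - b)
        = ((n : ℝ) - ℓ) / n := by
      unfold vnSq
      simp only [Pi.sub_apply, hmv, hb]
      have e2 : ∀ i : Fin n,
          (Real.sqrt ℓ / n - (if i ∈ T then 1 / Real.sqrt (ℓ:ℝ) else 0)) ^ 2
          = if i ∈ T then (Real.sqrt ℓ / n - 1 / Real.sqrt (ℓ:ℝ)) ^ 2
            else (Real.sqrt ℓ / n) ^ 2 := by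
        intro i; split <;> simp
      simp only [e2]
      rw [sum_ite_mem_const, hT]
      exact alg_key n ℓ (Real.sqrt ℓ) hnR hsℓ0 hsℓ
    rw [key]
  exact ⟨h1, h2, h3, by
    intro xstar hmin
    obtain ⟨x, hx⟩ := h3
    have hub : vnSq (A.mulVec xstar - b) ≤ ((n : ℝ) - ℓ) / n := (hmin x).trans hx
    have hnn : 0 ≤ vnSq (A.mulVec xstar - b) := Finset.sum_nonneg fun i _ => sq_nonneg _
    rw [h2]
    rcases eq_or_lt_of_le (show (ℓ:ℝ) ≤ n by exact_mod_cast hℓn') with heq | hlt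
    · rw [← heq]; simp
    · have h0 : (0:ℝ) < (n:ℝ) - ℓ := by linarith
      calc ((n : ℝ) / ((n : ℝ) - ℓ)) * vnSq (A.mulVec xstar - b)
          ≤ ((n : ℝ) / ((n : ℝ) - ℓ)) * (((n : ℝ) - ℓ) / n) := by gcongr
        _ = 1 := by field_simp⟩
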